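/- BuildHull is correct: upon termination (when Ā = ∅), the set F̄ equals the frame F of A, i.e., F̄ is exactly the set of extreme points of vrs(A) contained in A. Moreover, throughout the procedure the sets F̄ form a nested increasing chain of subsets of F. -/
import Mathlib


open scoped Classical
open Finset

noncomputable section

/-- The VRS (free-disposal convex) hull of a finite set of points in ℝ^m. -/
def vrs {m : ℕ} (S : Finset (Fin m → ℝ)) : Set (Fin m → ℝ) :=
  {z | ∃ l : (Fin m → ℝ) → ℝ, (∀ a, 0 ≤ l a) ∧ (∑ a ∈ S, l a) = 1 ∧
    ∀ k, z k ≤ ∑ a ∈ S, l a * a k}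

/-- The frame of `A`: the points of `A` that are extreme points of `vrs A`. -/
def frame {m : ℕ} (A : Finset (Fin m → ℝ)) : Finset (Fin m → ℝ) :=
  A.filter fun a => a ∈ Set.extremePoints ℝ (vrs A)

lemma vrs_convex {m : ℕ} (A : Finset (Fin m → ℝ)) : Convex ℝ (vrs A) := by
  rintro x ⟨lx, hlx0, hlx1, hlx⟩ y ⟨ly, hly0, hly1, hly⟩ s t hs ht hst
  refine ⟨fun a => s * lx a + t * ly a,
    fun a => add_nonneg (mul_nonneg hs (hlx0 a)) (mul_nonneg ht (hly0 a)), ?_, ?_⟩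
  · rw [Finset.sum_add_distrib, ← Finset.mul_sum, ← Finset.mul_sum, hlx1, hly1]
    linarith
  · intro k
    have h1 : s * x k ≤ s * ∑ a ∈ A, lx a * a k := by
      exact mul_le_mul_of_nonneg_left (hlx k) hs
    have h2 : t * y k ≤ t * ∑ a ∈ A, ly a * a k := by
      exact mul_le_mul_of_nonneg_left (hly k) ht
    have : (s • x + t • y) k = s * x k + t * y k := rfl
    rw [this]
    have : ∑ a ∈ A, (s * lx a + t * ly a) * a k
        = s * ∑ a ∈ A, lx a * a k + t * ∑ a ∈ A, ly a * a k := by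
      rw [Finset.mul_sum, Finset.mul_sum, ← Finset.sum_add_distrib]
      congr 1; ext a; ring
    rw [this]; linarith

lemma mem_vrs_self {m : ℕ} {A : Finset (Fin m → ℝ)} {a : Fin m → ℝ} (ha : a ∈ A) :
    a ∈ vrs A := by
  refine ⟨fun b => if b = a then 1 else 0, fun b => by positivity, ?_, ?_⟩
  · rw [Finset.sum_ite_eq' A a (fun _ => (1:ℝ))]
    simp [ha]
  · intro k
    have : ∑ b ∈ A, (if b = a then (1:ℝ) else 0) * b k
        = ∑ b ∈ A, (if b = a then a k else 0) := by
      apply Finset.sum_congr rfl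
      intro b _
      by_cases h : b = a <;> simp [h]
    rw [this, Finset.sum_ite_eq' A a (fun _ => a k)]
    simp [ha]

lemma vrs_downward {m : ℕ} {A : Finset (Fin m → ℝ)} {z w : Fin m → ℝ}
    (hw : w ∈ vrs A) (hzw : ∀ k, z k ≤ w k) : z ∈ vrs A := by
  obtain ⟨l, h0, h1, hle⟩ := hw
  exact ⟨l, h0, h1, fun k => (hzw k).trans (hle k)⟩

/-- An extreme point of `vrs A` which lies in `vrs S` for some `S ⊆ A` must be in `S`. -/
lemma extreme_mem_of_mem_vrs {m : ℕ} {A S : Finset (Fin m → ℝ)} (hSA : S ⊆ A)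
    {z : Fin m → ℝ} (hz : z ∈ Set.extremePoints ℝ (vrs A)) (hv : z ∈ vrs S) : z ∈ S := by
  obtain ⟨l, hl0, hl1, hle⟩ := hv
  set w : Fin m → ℝ := ∑ a ∈ S, l a • a with hw
  -- w is in the convex hull of S
  have hwch : w ∈ convexHull ℝ (S : Set (Fin m → ℝ)) := by
    have := Finset.centerMass_mem_convexHull S (fun i _ => hl0 i)
      (by rw [hl1]; norm_num) (fun i hi => Finset.mem_coe.2 hi) (z := id)
    rwa [Finset.centerMass_eq_of_sum_1 _ _ hl1] at this
  have hchsub : convexHull ℝ (S : Set (Fin m → ℝ)) ⊆ vrs A :=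
    convexHull_min (fun a ha => mem_vrs_self (hSA ha)) (vrs_convex A)
  have hwA : w ∈ vrs A := hchsub hwch
  have hwk : ∀ k, w k = ∑ a ∈ S, l a * a k := by
    intro k
    rw [hw]
    simp [Finset.sum_apply]
  have hzw : ∀ k, z k ≤ w k := fun k => (hle k).trans_eq (hwk k).symm
  -- z = w by extremality
  have hz2w : (2 : ℝ) • z - w ∈ vrs A := by
    refine vrs_downward hwA fun k => ?_
    have := hzw k
    have h2 : ((2:ℝ) • z - w) k = 2 * z k - w k := rfl
    rw [h2]; linarith
  have hseg : z ∈ openSegment ℝ ((2:ℝ) • z - w) w := by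
    refine ⟨1/2, 1/2, by norm_num, by norm_num, by norm_num, ?_⟩
    ext k
    have h2 : ((1/2 : ℝ) • ((2:ℝ) • z - w) + (1/2 : ℝ) • w) k
        = (1/2) * (2 * z k - w k) + (1/2) * w k := rfl
    rw [h2]; ring
  have hzeqw : z = w := by
    have h2 := (mem_extremePoints.1 hz).2
    exact ((h2 ((2:ℝ) • z - w) hz2w w hwA hseg).2).symm
  -- hence z is an extreme point of the convex hull of S, so z ∈ S
  have hzch : z ∈ convexHull ℝ (S : Set (Fin m → ℝ)) := hzeqw ▸ hwch
  have : z ∈ Set.extremePoints ℝ (convexHull ℝ (S : Set (Fin m → ℝ))) :=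
    inter_extremePoints_subset_extremePoints_of_subset hchsub ⟨hzch, hz⟩
  exact Finset.mem_coe.1 (extremePoints_convexHull_subset this)

theorem stmt10 {m : ℕ} (A : Finset (Fin m → ℝ))
    (Fbar Abar : ℕ → Finset (Fin m → ℝ))
    (h0F : Fbar 0 ⊆ frame A) (h0A : Abar 0 = A \ Fbar 0)
    (hstep : ∀ t, (Abar t).Nonempty →
      (∃ b ∈ Abar t, b ∈ vrs (Fbar t) ∧ Fbar (t+1) = Fbar t ∧
        Abar (t+1) = (Abar t).erase b) ∨
      (∃ a ∈ Abar t, a ∈ Set.extremePoints ℝ (vrs A) ∧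
        Fbar (t+1) = insert a (Fbar t) ∧ Abar (t+1) = (Abar t).erase a))
    (hstop : ∀ t, Abar t = ∅ → Fbar (t+1) = Fbar t ∧ Abar (t+1) = Abar t) :
    (∀ t, Fbar t ⊆ Fbar (t+1) ∧ Fbar t ⊆ frame A) ∧
    (∀ T, Abar T = ∅ → Fbar T = frame A) := by
  have hframesubA : frame A ⊆ A := Finset.filter_subset _ _
  -- main invariant
  have inv : ∀ t, (Fbar t ⊆ frame A ∧ Abar t ⊆ A) ∧ (∀ x ∈ frame A, x ∈ Fbar t ∨ x ∈ Abar t) := by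
    intro t
    induction t with
    | zero =>
      refine ⟨⟨h0F, h0A ▸ Finset.sdiff_subset⟩, fun x hx => ?_⟩
      by_cases h : x ∈ Fbar 0
      · exact Or.inl h
      · exact Or.inr (h0A ▸ Finset.mem_sdiff.2 ⟨hframesubA hx, h⟩)
    | succ t ih =>
      rcases Finset.eq_empty_or_nonempty (Abar t) with he | hne
      · obtain ⟨hF, hA⟩ := hstop t he
        rw [hF, hA]; exact ih
      · rcases hstep t hne with ⟨b, hb, hbv, hF, hA⟩ | ⟨a, ha, hax, hF, hA⟩
        · refine ⟨⟨hF ▸ ih.1.1, hA ▸ (Finset.erase_subset _ _).trans ih.1.2⟩,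
            fun x hx => ?_⟩
          rcases ih.2 x hx with h | h
          · exact Or.inl (hF ▸ h)
          · by_cases hxb : x = b
            · subst hxb
              have hxe : x ∈ Set.extremePoints ℝ (vrs A) :=
                (Finset.mem_filter.1 hx).2
              have : x ∈ Fbar t :=
                extreme_mem_of_mem_vrs (ih.1.1.trans hframesubA) hxe hbv
              exact Or.inl (hF ▸ this)
            · exact Or.inr (hA ▸ Finset.mem_erase.2 ⟨hxb, h⟩)
        · refine ⟨⟨?_, hA ▸ (Finset.erase_subset _ _).trans ih.1.2⟩, ?_⟩
          · rw [hF]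
            intro x hx
            rcases Finset.mem_insert.1 hx with h | h
            · subst h
              exact Finset.mem_filter.2 ⟨ih.1.2 ha, hax⟩
            · exact ih.1.1 h
          · intro x hx
            rcases ih.2 x hx with h | h
            · exact Or.inl (hF ▸ Finset.mem_insert_of_mem h)
            · by_cases hxa : x = a
              · exact Or.inl (hF ▸ hxa ▸ Finset.mem_insert_self _ _)
              · exact Or.inr (hA ▸ Finset.mem_erase.2 ⟨hxa, h⟩)
  refine ⟨fun t => ⟨?_, (inv t).1.1⟩, fun T hT => ?_⟩
  · rcases Finset.eq_empty_or_nonempty (Abar t) with he | hne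
    · exact (hstop t he).1 ▸ Finset.Subset.refl _
    · rcases hstep t hne with ⟨b, _, _, hF, _⟩ | ⟨a, _, _, hF, _⟩
      · exact hF ▸ Finset.Subset.refl _
      · exact hF ▸ Finset.subset_insert _ _
  · refine Finset.Subset.antisymm (inv T).1.1 fun x hx => ?_
    rcases (inv T).2 x hx with h | h
    · exact h
    · rw [hT] at h; exact absurd h (Finset.notMem_empty x)
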